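/- Consider X = ℝ∖{0} with x ≼ y iff u₁(x) ≤ u₁(y) and u₂(x) ≤ u₂(y), where u₁(x) = x, u₂(x) = 1/x for x > 0 and u₂(x) = −1/|x| for x < 0. Then {u₁, u₂} is a finite strict monotone multi-utility for (X,≼), yet every Debreu dense subset of X is uncountable. -/
import Mathlib


/-- The ground set `ℝ \ {0}`. -/
def X19 : Type := {x : ℝ // x ≠ 0}

/-- `u₁(x) = x`. -/
def u191 (x : X19) : ℝ := x.1

/-- `u₂(x) = 1/x` for `x > 0` and `u₂(x) = -1/|x|` for `x < 0`. -/
noncomputable def u192 (x : X19) : ℝ := if 0 < x.1 then 1 / x.1 else -(1 / |x.1|)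

/-- The partial order defined by the pair `{u₁, u₂}`. -/
noncomputable def le19 (x y : X19) : Prop := u191 x ≤ u191 y ∧ u192 x ≤ u192 y

lemma u192_eq (x : X19) : u192 x = 1 / x.1 := by
  unfold u192
  rcases lt_or_gt_of_ne x.2 with h | h
  · rw [if_neg (not_lt.mpr h.le), abs_of_neg h]
    field_simp
  · rw [if_pos h]

lemma le19_iff (x y : X19) : le19 x y ↔ (x.1 ≤ y.1 ∧ 1 / x.1 ≤ 1 / y.1) := by
  unfold le19 u191
  rw [u192_eq, u192_eq]

/-- `{u₁, u₂}` is a finite strict monotone multi-utility for `(ℝ \ {0}, ≼)`, yet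
every Debreu dense subset is uncountable. -/
theorem strict_monotone_multiutility_but_no_countable_debreu_dense :
    ((∀ x y, le19 x y ↔ (u191 x ≤ u191 y ∧ u192 x ≤ u192 y)) ∧
      (∀ x y, le19 x y → ¬ le19 y x → u191 x < u191 y) ∧
      (∀ x y, le19 x y → ¬ le19 y x → u192 x < u192 y)) ∧
    (∀ D : Set X19,
      (∀ x y, le19 x y → ¬ le19 y x → ∃ d ∈ D, le19 x d ∧ le19 d y) → ¬ D.Countable) := by
  constructor
  · refine ⟨fun x y => Iff.rfl, ?_, ?_⟩
    · intro x y h1 h2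
      have hle := (le19_iff x y).mp h1
      refine lt_of_le_of_ne hle.1 (fun he => h2 ?_)
      have hxy : x = y := Subtype.ext he
      rw [hxy] at h1 ⊢; exact h1
    · intro x y h1 h2
      have hle := (le19_iff x y).mp h1
      rw [u192_eq, u192_eq]
      refine lt_of_le_of_ne hle.2 (fun he => h2 ?_)
      have hxy : x = y := Subtype.ext (eq_of_one_div_eq_one_div he)
      rw [hxy] at h1 ⊢; exact h1
  · intro D hD hc
    have hV : (Subtype.val '' D : Set ℝ).Countable := hc.image _
    have hIio : ¬ (Set.Iio (0:ℝ)).Countable := fun h =>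
      ((Cardinal.mk_Iio_real 0) ▸ h.le_aleph0).not_gt Cardinal.aleph0_lt_continuum
    have hIoi : ¬ (Set.Ioi (0:ℝ)).Countable := fun h =>
      ((Cardinal.mk_Ioi_real 0) ▸ h.le_aleph0).not_gt Cardinal.aleph0_lt_continuum
    have hA : ¬ (Set.Iio (0:ℝ) ⊆ Subtype.val '' D) := fun h => hIio (hV.mono h)
    have hB : ¬ (Set.Ioi (0:ℝ) ⊆ Subtype.val '' D) := fun h => hIoi (hV.mono h)
    obtain ⟨a, ha, haD⟩ := Set.not_subset.mp hA
    obtain ⟨b, hb, hbD⟩ := Set.not_subset.mp hB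
    rw [Set.mem_Iio] at ha
    rw [Set.mem_Ioi] at hb
    set x : X19 := ⟨a, ne_of_lt ha⟩
    set y : X19 := ⟨b, ne_of_gt hb⟩
    have hxy : le19 x y := (le19_iff x y).mpr
      ⟨(ha.trans hb).le, ((one_div_neg.mpr ha).trans (one_div_pos.mpr hb)).le⟩
    have hnyx : ¬ le19 y x := fun h => absurd ((le19_iff y x).mp h).1 (not_le.mpr (ha.trans hb))
    obtain ⟨d, hdD, hxd, hdy⟩ := hD x y hxy hnyx
    rw [le19_iff] at hxd hdy
    rcases lt_trichotomy d.1 0 with hd | hd | hd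
    · -- d < 0 : then 1/a ≤ 1/d and a ≤ d < 0 gives d = a
      have h1 : (1:ℝ) / d.1 ≤ 1 / a := one_div_le_one_div_of_neg_of_le hd hxd.1
      have : d.1 = a := eq_of_one_div_eq_one_div (le_antisymm h1 hxd.2)
      exact haD ⟨d, hdD, this⟩
    · exact d.2 hd
    · -- d > 0 : then 1/b ≤ 1/d and 0 < d ≤ b gives d = b
      have h1 : (1:ℝ) / b ≤ 1 / d.1 := one_div_le_one_div_of_le hd hdy.1
      have : d.1 = b := eq_of_one_div_eq_one_div (le_antisymm hdy.2 h1)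
      exact hbD ⟨d, hdD, this⟩
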